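/- arXiv:0811.1649 — 2 statements merged into one kernel-verified Lean document; each statement's English description precedes it below -/
import Mathlib

section
/- For every ε ∈ [0,1/4], the local part of the system P^{2,ε} of two isotropic ε-PRBs equals 4ε, i.e., it is equal to the local part of a single isotropic ε-PRB. -/
open Finset

/-- n-bit strings. -/
abbrev Bits (n : ℕ) := Fin n → Bool

/-- A bipartite conditional "box" on n-bit alphabets: `P x y u v` is the
probability of outputs `(x, y)` given inputs `(u, v)`. -/
abbrev Box (n : ℕ) := Bits n → Bits n → Bits n → Bits n → ℝ

/-- `P` is a bipartite conditional probability distribution. -/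
def IsBox {n : ℕ} (P : Box n) : Prop :=
  (∀ x y u v, 0 ≤ P x y u v) ∧
  (∀ u v, ∑ x : Bits n, ∑ y : Bits n, P x y u v = 1)

/-- `P` is non-signalling. -/
def NonSignalling {n : ℕ} (P : Box n) : Prop :=
  (∀ y v u u', ∑ x : Bits n, P x y u v = ∑ x : Bits n, P x y u' v) ∧
  (∀ x u v v', ∑ y : Bits n, P x y u v = ∑ y : Bits n, P x y u v')

/-- The local deterministic box given by response functions `f` (Alice) and `g` (Bob). -/
def detBox {n : ℕ} (f g : Bits n → Bits n) : Box n :=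
  fun x y u v => if x = f u ∧ y = g v then 1 else 0

/-- `P` is local deterministic. -/
def IsLocalDet {n : ℕ} (P : Box n) : Prop :=
  ∃ f g : Bits n → Bits n, P = detBox f g

/-- `P` is local: a convex combination of local deterministic boxes. -/
def IsLocal {n : ℕ} (P : Box n) : Prop :=
  ∃ w : (Bits n → Bits n) × (Bits n → Bits n) → ℝ,
    (∀ fg, 0 ≤ w fg) ∧ (∑ fg, w fg = 1) ∧
    (∀ x y u v, P x y u v =
      ∑ fg : (Bits n → Bits n) × (Bits n → Bits n), w fg * detBox fg.1 fg.2 x y u v)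

/-- The local part of `P`: the maximal weight `p` such that `P` is a convex
combination of a local box (weight `p`) and a non-signalling box (weight `1 - p`). -/
noncomputable def localPart {n : ℕ} (P : Box n) : ℝ :=
  sSup {p : ℝ | 0 ≤ p ∧ p ≤ 1 ∧
    ∃ PL PNS : Box n, IsBox PL ∧ IsLocal PL ∧ IsBox PNS ∧ NonSignalling PNS ∧
      ∀ x y u v, P x y u v = p * PL x y u v + (1 - p) * PNS x y u v}

/-- Single-copy isotropic ε-PRB entries. -/
noncomputable def isoPRB1 (ε : ℝ) (x y u v : Bool) : ℝ :=
  if xor x y = (u && v) then (1 - ε) / 2 else ε / 2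

/-- The system of n independent isotropic ε-PRBs. -/
noncomputable def isoPRB (n : ℕ) (ε : ℝ) : Box n :=
  fun x y u v => ∏ i : Fin n, isoPRB1 ε (x i) (y i) (u i) (v i)

/-- Single-copy maximally biased δ-PRB entries. -/
noncomputable def biasedPRB1 (δ : ℝ) (x y u v : Bool) : ℝ :=
  if u && v then
    match x, y with
    | false, false => 0
    | true,  false => 1 / 2 - δ / 2
    | false, true  => 1 / 2 + δ / 2
    | true,  true  => 0
  else
    match x, y with
    | false, false => 1 / 2 - δ / 2
    | true,  false => 0
    | false, true  => δ
    | true,  true  => 1 / 2 - δ / 2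

/-- The system of n independent maximally biased δ-PRBs. -/
noncomputable def biasedPRB (n : ℕ) (δ : ℝ) : Box n :=
  fun x y u v => ∏ i : Fin n, biasedPRB1 δ (x i) (y i) (u i) (v i)


section Stmt5Aux

/-- Truth-table function builder. -/
def bf (w x y z : Bool) : Bool → Bool → Bool :=
  fun a b => if a then (if b then z else y) else (if b then x else w)

def bf1 (w x : Bool) : Bool → Bool := fun a => if a then x else w

abbrev SD := (Bool→Bool→Bool) × (Bool→Bool→Bool) × (Bool→Bool→Bool) × (Bool→Bool→Bool)
abbrev SD1 := (Bool→Bool) × (Bool→Bool)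

def stratsA : List SD := [
  (bf false false false false, bf false false false true, bf false false true false, bf false false false false),
  (bf false false false false, bf false false true false, bf false false true false, bf false true false true),
  (bf false false false false, bf false true false false, bf false false false true, bf false false false false),
  (bf false false false false, bf false true true true, bf false false false true, bf true false true false),
  (bf false false false false, bf true false false false, bf false false false true, bf false true false true),
  (bf false false false false, bf true false true true, bf false false false true, bf true true true true),
  (bf false false false false, bf true true false true, bf false false true false, bf true false true false),
  (bf false false false false, bf true true true false, bf false false true false, bf true true true true),
  (bf false false false true, bf false false false false, bf false false false false, bf false true false false),
  (bf false false false true, bf false true false true, bf false false false false, bf true false false false),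
  (bf false false false true, bf true false true false, bf false false false false, bf false true true true),
  (bf false false false true, bf true true true true, bf false false false false, bf true false true true),
  (bf false false true false, bf false false false false, bf false false false false, bf false false false true),
  (bf false false true false, bf false true false true, bf false false false false, bf false false true false),
  (bf false false true false, bf true false true false, bf false false false false, bf true true false true),
  (bf false false true false, bf true true true true, bf false false false false, bf true true true false),
  (bf false false true true, bf false false false true, bf true false false false, bf false false false false),
  (bf false false true true, bf false false true false, bf true false false false, bf false true false true),
  (bf false false true true, bf false true false false, bf false true false false, bf false false false false),
  (bf false false true true, bf false true true true, bf false true false false, bf true false true false),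
  (bf false false true true, bf true false false false, bf false true false false, bf false true false true),
  (bf false false true true, bf true false true true, bf false true false false, bf true true true true),
  (bf false false true true, bf true true false true, bf true false false false, bf true false true false),
  (bf false false true true, bf true true true false, bf true false false false, bf true true true true),
  (bf false true false false, bf false false false false, bf false false true true, bf false true false false),
  (bf false true false false, bf false true false true, bf false false true true, bf true false false false),
  (bf false true false false, bf true false true false, bf false false true true, bf false true true true),
  (bf false true false false, bf true true true true, bf false false true true, bf true false true true),
  (bf false true true true, bf false false false false, bf true true false false, bf false false false true),
  (bf false true true true, bf false true false true, bf true true false false, bf false false true false),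
  (bf false true true true, bf true false true false, bf true true false false, bf true true false true),
  (bf false true true true, bf true true true true, bf true true false false, bf true true true false),
  (bf true false false false, bf false false false false, bf false false true true, bf false false false true),
  (bf true false false false, bf false true false true, bf false false true true, bf false false true false),
  (bf true false false false, bf true false true false, bf false false true true, bf true true false true),
  (bf true false false false, bf true true true true, bf false false true true, bf true true true false),
  (bf true false true true, bf false false false false, bf true true false false, bf false true false false),
  (bf true false true true, bf false true false true, bf true true false false, bf true false false false),
  (bf true false true true, bf true false true false, bf true true false false, bf false true true true),
  (bf true false true true, bf true true true true, bf true true false false, bf true false true true),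
  (bf true true false false, bf false false false true, bf false true true true, bf false false false false),
  (bf true true false false, bf false false true false, bf false true true true, bf false true false true),
  (bf true true false false, bf false true false false, bf true false true true, bf false false false false),
  (bf true true false false, bf false true true true, bf true false true true, bf true false true false),
  (bf true true false false, bf true false false false, bf true false true true, bf false true false true),
  (bf true true false false, bf true false true true, bf true false true true, bf true true true true),
  (bf true true false false, bf true true false true, bf false true true true, bf true false true false),
  (bf true true false false, bf true true true false, bf false true true true, bf true true true true),
  (bf true true false true, bf false false false false, bf true true true true, bf false false false true),
  (bf true true false true, bf false true false true, bf true true true true, bf false false true false),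
  (bf true true false true, bf true false true false, bf true true true true, bf true true false true),
  (bf true true false true, bf true true true true, bf true true true true, bf true true true false),
  (bf true true true false, bf false false false false, bf true true true true, bf false true false false),
  (bf true true true false, bf false true false true, bf true true true true, bf true false false false),
  (bf true true true false, bf true false true false, bf true true true true, bf false true true true),
  (bf true true true false, bf true true true true, bf true true true true, bf true false true true),
  (bf true true true true, bf false false false true, bf true true false true, bf false false false false),
  (bf true true true true, bf false false true false, bf true true false true, bf false true false true),
  (bf true true true true, bf false true false false, bf true true true false, bf false false false false),
  (bf true true true true, bf false true true true, bf true true true false, bf true false true false),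
  (bf true true true true, bf true false false false, bf true true true false, bf false true false true),
  (bf true true true true, bf true false true true, bf true true true false, bf true true true true),
  (bf true true true true, bf true true false true, bf true true false true, bf true false true false),
  (bf true true true true, bf true true true false, bf true true false true, bf true true true true)]

def stratsLL : List SD := [
  (bf false false false false, bf false false false false, bf false false false false, bf false false false false),
  (bf false false false false, bf false false false false, bf false false false false, bf false true false true),
  (bf false false false false, bf true false true false, bf false false false false, bf false true false true),
  (bf false false false false, bf true false true false, bf false false false false, bf true true true true),
  (bf false false false false, bf false true false true, bf false false false false, bf false false false false),
  (bf false false false false, bf false true false true, bf false false false false, bf true false true false),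
  (bf false false false false, bf true true true true, bf false false false false, bf true false true false),
  (bf false false false false, bf true true true true, bf false false false false, bf true true true true),
  (bf false false false false, bf false false false false, bf false false true true, bf false false false false),
  (bf false false false false, bf false false false false, bf false false true true, bf false true false true),
  (bf false false false false, bf true false true false, bf false false true true, bf false true false true),
  (bf false false false false, bf true false true false, bf false false true true, bf true true true true),
  (bf false false false false, bf false true false true, bf false false true true, bf false false false false),
  (bf false false false false, bf false true false true, bf false false true true, bf true false true false),
  (bf false false false false, bf true true true true, bf false false true true, bf true false true false),
  (bf false false false false, bf true true true true, bf false false true true, bf true true true true),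
  (bf true true false false, bf false false false false, bf false false true true, bf false false false false),
  (bf true true false false, bf false false false false, bf false false true true, bf false true false true),
  (bf true true false false, bf true false true false, bf false false true true, bf false true false true),
  (bf true true false false, bf true false true false, bf false false true true, bf true true true true),
  (bf true true false false, bf false true false true, bf false false true true, bf false false false false),
  (bf true true false false, bf false true false true, bf false false true true, bf true false true false),
  (bf true true false false, bf true true true true, bf false false true true, bf true false true false),
  (bf true true false false, bf true true true true, bf false false true true, bf true true true true),
  (bf true true false false, bf false false false false, bf true true true true, bf false false false false),
  (bf true true false false, bf false false false false, bf true true true true, bf false true false true),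
  (bf true true false false, bf true false true false, bf true true true true, bf false true false true),
  (bf true true false false, bf true false true false, bf true true true true, bf true true true true),
  (bf true true false false, bf false true false true, bf true true true true, bf false false false false),
  (bf true true false false, bf false true false true, bf true true true true, bf true false true false),
  (bf true true false false, bf true true true true, bf true true true true, bf true false true false),
  (bf true true false false, bf true true true true, bf true true true true, bf true true true true),
  (bf false false true true, bf false false false false, bf false false false false, bf false false false false),
  (bf false false true true, bf false false false false, bf false false false false, bf false true false true),
  (bf false false true true, bf true false true false, bf false false false false, bf false true false true),
  (bf false false true true, bf true false true false, bf false false false false, bf true true true true),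
  (bf false false true true, bf false true false true, bf false false false false, bf false false false false),
  (bf false false true true, bf false true false true, bf false false false false, bf true false true false),
  (bf false false true true, bf true true true true, bf false false false false, bf true false true false),
  (bf false false true true, bf true true true true, bf false false false false, bf true true true true),
  (bf false false true true, bf false false false false, bf true true false false, bf false false false false),
  (bf false false true true, bf false false false false, bf true true false false, bf false true false true),
  (bf false false true true, bf true false true false, bf true true false false, bf false true false true),
  (bf false false true true, bf true false true false, bf true true false false, bf true true true true),
  (bf false false true true, bf false true false true, bf true true false false, bf false false false false),
  (bf false false true true, bf false true false true, bf true true false false, bf true false true false),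
  (bf false false true true, bf true true true true, bf true true false false, bf true false true false),
  (bf false false true true, bf true true true true, bf true true false false, bf true true true true),
  (bf true true true true, bf false false false false, bf true true false false, bf false false false false),
  (bf true true true true, bf false false false false, bf true true false false, bf false true false true),
  (bf true true true true, bf true false true false, bf true true false false, bf false true false true),
  (bf true true true true, bf true false true false, bf true true false false, bf true true true true),
  (bf true true true true, bf false true false true, bf true true false false, bf false false false false),
  (bf true true true true, bf false true false true, bf true true false false, bf true false true false),
  (bf true true true true, bf true true true true, bf true true false false, bf true false true false),
  (bf true true true true, bf true true true true, bf true true false false, bf true true true true),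
  (bf true true true true, bf false false false false, bf true true true true, bf false false false false),
  (bf true true true true, bf false false false false, bf true true true true, bf false true false true),
  (bf true true true true, bf true false true false, bf true true true true, bf false true false true),
  (bf true true true true, bf true false true false, bf true true true true, bf true true true true),
  (bf true true true true, bf false true false true, bf true true true true, bf false false false false),
  (bf true true true true, bf false true false true, bf true true true true, bf true false true false),
  (bf true true true true, bf true true true true, bf true true true true, bf true false true false),
  (bf true true true true, bf true true true true, bf true true true true, bf true true true true)]

def strats1 : List SD1 := [
  (bf1 false false, bf1 false false),
  (bf1 false false, bf1 false true),
  (bf1 true false, bf1 false true),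
  (bf1 true false, bf1 true true),
  (bf1 false true, bf1 false false),
  (bf1 false true, bf1 true false),
  (bf1 true true, bf1 true false),
  (bf1 true true, bf1 true true)]

def cnt (s : SD) (x0 x1 y0 y1 u0 u1 v0 v1 : Bool) : ℕ :=
  if (x0 = s.1 u0 u1 ∧ x1 = s.2.1 u0 u1 ∧ y0 = s.2.2.1 v0 v1 ∧ y1 = s.2.2.2 v0 v1) then 1 else 0

def cnt1 (s : SD1) (x0 y0 u0 v0 : Bool) : ℕ := if (x0 = s.1 u0 ∧ y0 = s.2 v0) then 1 else 0

def capA (x0 x1 y0 y1 u0 u1 v0 v1 : Bool) : ℕ :=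
  if (xor x0 y0 ≠ (u0 && v0)) ∧ (xor x1 y1 ≠ (u1 && v1)) then 0
  else if (xor x0 y0 ≠ (u0 && v0)) ∨ (xor x1 y1 ≠ (u1 && v1)) then 4 else 24

def capLL (x0 x1 y0 y1 u0 u1 v0 v1 : Bool) : ℕ :=
  (if xor x0 y0 = (u0 && v0) then 3 else 1) * (if xor x1 y1 = (u1 && v1) then 3 else 1)

def cap1 (x0 y0 u0 v0 : Bool) : ℕ := if xor x0 y0 = (u0 && v0) then 3 else 1

theorem capAfact : ∀ x0 x1 y0 y1 u0 u1 v0 v1 : Bool,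
    ((stratsA.map (fun s => cnt s x0 x1 y0 y1 u0 u1 v0 v1)).sum) ≤ capA x0 x1 y0 y1 u0 u1 v0 v1 := by decide

theorem capLLfact : ∀ x0 x1 y0 y1 u0 u1 v0 v1 : Bool,
    ((stratsLL.map (fun s => cnt s x0 x1 y0 y1 u0 u1 v0 v1)).sum) = capLL x0 x1 y0 y1 u0 u1 v0 v1 := by decide

theorem cap1fact : ∀ x0 y0 u0 v0 : Bool,
    ((strats1.map (fun s => cnt1 s x0 y0 u0 v0)).sum) = cap1 x0 y0 u0 v0 := by decide

theorem lenA : stratsA.length = 64 := by rfl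
theorem lenLL : stratsLL.length = 64 := by rfl
theorem len1 : strats1.length = 8 := by rfl

end Stmt5Aux

section Stmt5Aux2
open Finset

def bb (a b : Bool) : Bits 2 := ![a, b]
@[simp] lemma bb0 (a b : Bool) : bb a b 0 = a := rfl
@[simp] lemma bb1 (a b : Bool) : bb a b 1 = b := rfl
def b1 (a : Bool) : Bits 1 := ![a]
@[simp] lemma b10 (a : Bool) : b1 a 0 = a := rfl

lemma univ_bits2 : (univ : Finset (Bits 2)) = {bb false false, bb false true, bb true false, bb true true} := by decide

lemma sum_bits2 (h : Bits 2 → ℝ) :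
    ∑ x : Bits 2, h x = h (bb false false) + h (bb false true) + h (bb true false) + h (bb true true) := by
  rw [univ_bits2, Finset.sum_insert (by decide), Finset.sum_insert (by decide),
    Finset.sum_insert (by decide), Finset.sum_singleton]
  ring

lemma univ_bits1 : (univ : Finset (Bits 1)) = {b1 false, b1 true} := by decide

lemma sum_bits1 (h : Bits 1 → ℝ) : ∑ x : Bits 1, h x = h (b1 false) + h (b1 true) := by
  rw [univ_bits1, Finset.sum_insert (by decide), Finset.sum_singleton]

lemma detBox_mul {n : ℕ} (f g : Bits n → Bits n) (x y u v : Bits n) :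
    detBox f g x y u v = (if x = f u then (1:ℝ) else 0) * (if y = g v then 1 else 0) := by
  unfold detBox; by_cases h1 : x = f u <;> by_cases h2 : y = g v <;> simp [h1, h2]

lemma detBox_sum_xy {n : ℕ} (f g : Bits n → Bits n) (u v : Bits n) :
    ∑ x : Bits n, ∑ y : Bits n, detBox f g x y u v = 1 := by
  simp [detBox_mul, ← Finset.sum_mul, Finset.sum_ite_eq']

lemma detBox_margA {n : ℕ} (f g : Bits n → Bits n) (y u v : Bits n) :
    ∑ x : Bits n, detBox f g x y u v = if y = g v then 1 else 0 := by
  simp [detBox_mul, ← Finset.sum_mul, Finset.sum_ite_eq']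

lemma detBox_margB {n : ℕ} (f g : Bits n → Bits n) (x u v : Bits n) :
    ∑ y : Bits n, detBox f g x y u v = if x = f u then 1 else 0 := by
  simp [detBox_mul, ← Finset.mul_sum, Finset.sum_ite_eq']

lemma listsum_swap {α β : Type*} [Fintype β] (l : List α) (h : α → β → ℝ) :
    ∑ b : β, (l.map fun s => h s b).sum = (l.map fun s => ∑ b : β, h s b).sum := by
  induction l with
  | nil => simp
  | cons a t ih => simp [Finset.sum_add_distrib, ih]

lemma sum_count_nat {α : Type*} [Fintype α] [DecidableEq α] (l : List α) :
    ∑ a : α, l.count a = l.length := by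
  induction l with
  | nil => simp
  | cons a t ih => simp [List.count_cons, Finset.sum_add_distrib, ih, Finset.sum_ite_eq']

lemma sum_count_mul {α : Type*} [Fintype α] [DecidableEq α] (l : List α) (h : α → ℝ) :
    ∑ a : α, (l.count a : ℝ) * h a = (l.map h).sum := by
  induction l with
  | nil => simp
  | cons a t ih =>
      simp only [List.map_cons, List.sum_cons]
      have e : ∀ b, ((a::t).count b : ℝ) * h b
          = (t.count b : ℝ) * h b + (if b = a then (1:ℝ) else 0) * h b := by
        intro b; by_cases hb : b = a <;> simp [hb, List.count_cons, @eq_comm _ a b] <;> ring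
      rw [Finset.sum_congr rfl fun b _ => e b, Finset.sum_add_distrib, ih]
      simp [ite_mul, Finset.sum_ite_eq']
      ring

/-- two-copy strategies from boolean data -/
def mkF (p q : Bool → Bool → Bool) : Bits 2 → Bits 2 := fun u => bb (p (u 0) (u 1)) (q (u 0) (u 1))

def toStrat (s : SD) : (Bits 2 → Bits 2) × (Bits 2 → Bits 2) := (mkF s.1 s.2.1, mkF s.2.2.1 s.2.2.2)

lemma eq_mkF (p q : Bool → Bool → Bool) (x u : Bits 2) :
    x = mkF p q u ↔ (x 0 = p (u 0) (u 1) ∧ x 1 = q (u 0) (u 1)) := by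
  rw [funext_iff, Fin.forall_fin_two]; rfl

lemma detBox_cnt (s : SD) (x y u v : Bits 2) :
    detBox (toStrat s).1 (toStrat s).2 x y u v
      = ((cnt s (x 0) (x 1) (y 0) (y 1) (u 0) (u 1) (v 0) (v 1) : ℕ) : ℝ) := by
  unfold detBox cnt toStrat
  simp only [eq_mkF, and_assoc]
  split_ifs <;> simp

lemma list_det_cast (l : List SD) (x y u v : Bits 2) :
    ((l.map fun s => detBox (toStrat s).1 (toStrat s).2 x y u v).sum)
      = (((l.map fun s => cnt s (x 0) (x 1) (y 0) (y 1) (u 0) (u 1) (v 0) (v 1)).sum : ℕ) : ℝ) := by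
  induction l with
  | nil => simp
  | cons a t ih => simp [detBox_cnt, ih]; rfl

/-- one-copy strategies -/
def mkF1 (p : Bool → Bool) : Bits 1 → Bits 1 := fun u => b1 (p (u 0))

def toStrat1 (s : SD1) : (Bits 1 → Bits 1) × (Bits 1 → Bits 1) := (mkF1 s.1, mkF1 s.2)

lemma eq_mkF1 (p : Bool → Bool) (x u : Bits 1) : x = mkF1 p u ↔ x 0 = p (u 0) := by
  rw [funext_iff, Fin.forall_fin_one]; rfl

lemma detBox_cnt1 (s : SD1) (x y u v : Bits 1) :
    detBox (toStrat1 s).1 (toStrat1 s).2 x y u v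
      = ((cnt1 s (x 0) (y 0) (u 0) (v 0) : ℕ) : ℝ) := by
  unfold detBox cnt1 toStrat1
  simp only [eq_mkF1]
  split_ifs <;> simp

lemma list_det_cast1 (l : List SD1) (x y u v : Bits 1) :
    ((l.map fun s => detBox (toStrat1 s).1 (toStrat1 s).2 x y u v).sum)
      = (((l.map fun s => cnt1 s (x 0) (y 0) (u 0) (v 0)).sum : ℕ) : ℝ) := by
  induction l with
  | nil => simp
  | cons a t ih => simp [detBox_cnt1, ih]; rfl

end Stmt5Aux2

section Stmt5Aux3
open Finset

noncomputable def prF (a b c d : Bool) : ℝ := if xor a b = (c && d) then 1/2 else 0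
noncomputable def lF (a b c d : Bool) : ℝ := if xor a b = (c && d) then 3/8 else 1/8

lemma iso1_decomp (ε : ℝ) (a b c d : Bool) :
    isoPRB1 ε a b c d = (1 - 4*ε) * prF a b c d + 4*ε * lF a b c d := by
  unfold isoPRB1 prF lF; split_ifs <;> ring

lemma iso2_factor (ε : ℝ) (x y u v : Bits 2) :
    isoPRB 2 ε x y u v = isoPRB1 ε (x 0) (y 0) (u 0) (v 0) * isoPRB1 ε (x 1) (y 1) (u 1) (v 1) := by
  unfold isoPRB; rw [Fin.prod_univ_two]

lemma iso1_entry (ε : ℝ) (x y u v : Bits 1) :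
    isoPRB 1 ε x y u v = isoPRB1 ε (x 0) (y 0) (u 0) (v 0) := by
  unfold isoPRB; rw [Fin.prod_univ_one]

lemma prF_nonneg (a b c d : Bool) : 0 ≤ prF a b c d := by unfold prF; split_ifs <;> norm_num
lemma lF_nonneg (a b c d : Bool) : 0 ≤ lF a b c d := by unfold lF; split_ifs <;> norm_num

lemma prF_sumA (b c d : Bool) : prF false b c d + prF true b c d = 1/2 := by
  cases b <;> cases c <;> cases d <;> norm_num [prF]
lemma prF_sumB (a c d : Bool) : prF a false c d + prF a true c d = 1/2 := by
  cases a <;> cases c <;> cases d <;> norm_num [prF]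
lemma lF_sumA (b c d : Bool) : lF false b c d + lF true b c d = 1/2 := by
  cases b <;> cases c <;> cases d <;> norm_num [lF]
lemma lF_sumB (a c d : Bool) : lF a false c d + lF a true c d = 1/2 := by
  cases a <;> cases c <;> cases d <;> norm_num [lF]

lemma sum2_prod (F G : Bool → Bool → ℝ) :
    ∑ x : Bits 2, ∑ y : Bits 2, F (x 0) (y 0) * G (x 1) (y 1)
      = (F false false + F false true + F true false + F true true)
        * (G false false + G false true + G true false + G true true) := by
  rw [sum_bits2]
  rw [sum_bits2, sum_bits2, sum_bits2, sum_bits2]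
  simp only [bb0, bb1]
  ring

lemma sum1_prodx (F G : Bool → ℝ) :
    ∑ x : Bits 2, F (x 0) * G (x 1) = (F false + F true) * (G false + G true) := by
  rw [sum_bits2]; simp only [bb0, bb1]; ring

/-- The explicitly local "correction" box `A`. -/
noncomputable def Abox : Box 2 := fun x y u v =>
  (((stratsA.map fun s => cnt s (x 0) (x 1) (y 0) (y 1) (u 0) (u 1) (v 0) (v 1)).sum : ℕ) : ℝ) / 64

lemma A_list (x y u v : Bits 2) :
    Abox x y u v = ((stratsA.map fun s => detBox (toStrat s).1 (toStrat s).2 x y u v).sum) / 64 := by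
  unfold Abox; rw [list_det_cast]

/-- `L ⊗ L`. -/
noncomputable def LLb : Box 2 := fun x y u v =>
  ((capLL (x 0) (x 1) (y 0) (y 1) (u 0) (u 1) (v 0) (v 1) : ℕ) : ℝ) / 64

lemma LL_eq (x y u v : Bits 2) :
    LLb x y u v = lF (x 0) (y 0) (u 0) (v 0) * lF (x 1) (y 1) (u 1) (v 1) := by
  unfold LLb capLL lF; push_cast; split_ifs <;> norm_num

noncomputable def PR2 : Box 2 := fun x y u v =>
  prF (x 0) (y 0) (u 0) (v 0) * prF (x 1) (y 1) (u 1) (v 1)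

noncomputable def CRb : Box 2 := fun x y u v =>
  prF (x 0) (y 0) (u 0) (v 0) * lF (x 1) (y 1) (u 1) (v 1)
    + lF (x 0) (y 0) (u 0) (v 0) * prF (x 1) (y 1) (u 1) (v 1)

lemma CR_eq (x y u v : Bits 2) :
    CRb x y u v = ((capA (x 0) (x 1) (y 0) (y 1) (u 0) (u 1) (v 0) (v 1) : ℕ) : ℝ) / 64 := by
  unfold CRb capA prF lF
  by_cases h1 : xor (x 0) (y 0) = (u 0 && v 0) <;>
    by_cases h2 : xor (x 1) (y 1) = (u 1 && v 1) <;> norm_num [h1, h2]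

lemma A_le_CR (x y u v : Bits 2) : Abox x y u v ≤ CRb x y u v := by
  rw [CR_eq]; unfold Abox
  have h := capAfact (x 0) (x 1) (y 0) (y 1) (u 0) (u 1) (v 0) (v 1)
  have h' : ((stratsA.map fun s => cnt s (x 0) (x 1) (y 0) (y 1) (u 0) (u 1) (v 0) (v 1)).sum : ℝ)
      ≤ ((capA (x 0) (x 1) (y 0) (y 1) (u 0) (u 1) (v 0) (v 1) : ℕ) : ℝ) := by exact_mod_cast h
  linarith

lemma A_nonneg (x y u v : Bits 2) : 0 ≤ Abox x y u v := by unfold Abox; positivity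

lemma map_one_sum {α : Type*} (l : List α) : ((l.map fun _ => (1:ℝ)).sum) = l.length := by
  induction l with
  | nil => simp
  | cons a t ih => simp [ih]; ring

lemma A_sum_xy (u v : Bits 2) : ∑ x : Bits 2, ∑ y : Bits 2, Abox x y u v = 1 := by
  simp only [A_list]
  rw [Finset.sum_congr rfl (fun x _ => (Finset.sum_div _ _ _).symm), ← Finset.sum_div]
  rw [Finset.sum_congr rfl (fun x _ => listsum_swap _ _), listsum_swap]
  have e : (stratsA.map fun s => ∑ x : Bits 2, ∑ y : Bits 2, detBox (toStrat s).1 (toStrat s).2 x y u v)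
      = stratsA.map fun _ => (1:ℝ) :=
    List.map_congr_left fun s _ => detBox_sum_xy (toStrat s).1 (toStrat s).2 u v
  rw [e, map_one_sum, lenA]; norm_num

lemma A_margx (y u v u' : Bits 2) : ∑ x : Bits 2, Abox x y u v = ∑ x : Bits 2, Abox x y u' v := by
  have key : ∀ w : Bits 2, ∑ x : Bits 2, Abox x y w v
      = ((stratsA.map fun s => if y = (toStrat s).2 v then (1:ℝ) else 0).sum) / 64 := by
    intro w
    simp only [A_list]
    rw [← Finset.sum_div, listsum_swap]
    congr 2
    exact List.map_congr_left fun s _ => detBox_margA (toStrat s).1 (toStrat s).2 y w v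
  rw [key, key]

lemma A_margy (x u v v' : Bits 2) : ∑ y : Bits 2, Abox x y u v = ∑ y : Bits 2, Abox x y u v' := by
  have key : ∀ w : Bits 2, ∑ y : Bits 2, Abox x y u w
      = ((stratsA.map fun s => if x = (toStrat s).1 u then (1:ℝ) else 0).sum) / 64 := by
    intro w
    simp only [A_list]
    rw [← Finset.sum_div, listsum_swap]
    congr 2
    exact List.map_congr_left fun s _ => detBox_margB (toStrat s).1 (toStrat s).2 x u w
  rw [key, key]

end Stmt5Aux3

section Stmt5Aux4
open Finset

lemma lF_sum4 (c d : Bool) :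
    lF false false c d + lF false true c d + lF true false c d + lF true true c d = 1 := by
  cases c <;> cases d <;> norm_num [lF]

lemma prF_sum4 (c d : Bool) :
    prF false false c d + prF false true c d + prF true false c d + prF true true c d = 1 := by
  cases c <;> cases d <;> norm_num [prF]

/-- real-valued multiplicity of `a` in `l` -/
def cntOf {α : Type*} [DecidableEq α] (l : List α) (a : α) : ℝ :=
  ((l.map fun b => if a = b then (1:ℝ) else 0).sum)

lemma cntOf_nonneg {α : Type*} [DecidableEq α] (l : List α) (a : α) : 0 ≤ cntOf l a := by
  unfold cntOf
  induction l with
  | nil => simp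
  | cons b t ih => simp only [List.map_cons, List.sum_cons]; positivity

lemma sum_cntOf {α : Type*} [Fintype α] [DecidableEq α] (l : List α) :
    ∑ a : α, cntOf l a = l.length := by
  unfold cntOf
  induction l with
  | nil => simp
  | cons b t ih =>
      simp only [List.map_cons, List.sum_cons, List.length_cons, Finset.sum_add_distrib, ih]
      rw [Finset.sum_ite_eq']
      simp
      ring

lemma sum_cntOf_mul {α : Type*} [Fintype α] [DecidableEq α] (l : List α) (h : α → ℝ) :
    ∑ a : α, cntOf l a * h a = (l.map h).sum := by
  unfold cntOf
  induction l with
  | nil => simp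
  | cons b t ih =>
      simp only [List.map_cons, List.sum_cons, add_mul, Finset.sum_add_distrib, ih]
      rw [Finset.sum_congr rfl (fun a _ => by rw [ite_mul, one_mul, zero_mul])]
      rw [Finset.sum_ite_eq']
      simp [add_comm]

lemma isLocal_of_list {n : ℕ} (l : List ((Bits n → Bits n) × (Bits n → Bits n)))
    (hl : l.length ≠ 0) (B : Box n)
    (hB : ∀ x y u v, B x y u v = ((l.map fun fg => detBox fg.1 fg.2 x y u v).sum) / l.length) :
    IsLocal B := by
  refine ⟨fun fg => cntOf l fg / l.length, fun fg => by
    have := cntOf_nonneg l fg; positivity, ?_, ?_⟩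
  · rw [← Finset.sum_div, sum_cntOf]
    exact div_self (by exact_mod_cast hl)
  · intro x y u v
    rw [hB]
    simp only [div_mul_eq_mul_div]
    rw [← Finset.sum_div, sum_cntOf_mul]

lemma A_local : IsLocal Abox := by
  apply isLocal_of_list (stratsA.map toStrat) (by simp [lenA])
  intro x y u v
  rw [A_list, List.map_map]
  simp only [List.length_map, lenA]
  rfl

lemma LL_list (x y u v : Bits 2) :
    LLb x y u v = ((stratsLL.map fun s => detBox (toStrat s).1 (toStrat s).2 x y u v).sum) / 64 := by
  unfold LLb; rw [list_det_cast, capLLfact]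

lemma LL_local : IsLocal LLb := by
  apply isLocal_of_list (stratsLL.map toStrat) (by simp [lenLL])
  intro x y u v
  rw [LL_list, List.map_map]
  simp only [List.length_map, lenLL]
  rfl

lemma LL_nonneg (x y u v : Bits 2) : 0 ≤ LLb x y u v := by unfold LLb; positivity

lemma LL_sum_xy (u v : Bits 2) : ∑ x : Bits 2, ∑ y : Bits 2, LLb x y u v = 1 := by
  simp only [LL_eq]
  have e := sum2_prod (fun a b => lF a b (u 0) (v 0)) (fun a b => lF a b (u 1) (v 1))
  rw [e, lF_sum4, lF_sum4]
  norm_num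

lemma PR2_nonneg (x y u v : Bits 2) : 0 ≤ PR2 x y u v :=
  mul_nonneg (prF_nonneg _ _ _ _) (prF_nonneg _ _ _ _)

lemma PR2_sum_xy (u v : Bits 2) : ∑ x : Bits 2, ∑ y : Bits 2, PR2 x y u v = 1 := by
  unfold PR2
  have e := sum2_prod (fun a b => prF a b (u 0) (v 0)) (fun a b => prF a b (u 1) (v 1))
  rw [e, prF_sum4, prF_sum4]
  norm_num

lemma CR_sum_xy (u v : Bits 2) : ∑ x : Bits 2, ∑ y : Bits 2, CRb x y u v = 2 := by
  unfold CRb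
  simp only [Finset.sum_add_distrib]
  have e1 := sum2_prod (fun a b => prF a b (u 0) (v 0)) (fun a b => lF a b (u 1) (v 1))
  have e2 := sum2_prod (fun a b => lF a b (u 0) (v 0)) (fun a b => prF a b (u 1) (v 1))
  rw [e1, e2, prF_sum4, prF_sum4, lF_sum4, lF_sum4]
  norm_num

lemma PR2_margx (y u v : Bits 2) : ∑ x : Bits 2, PR2 x y u v = 1/4 := by
  unfold PR2
  have e := sum1_prodx (fun a => prF a (y 0) (u 0) (v 0)) (fun a => prF a (y 1) (u 1) (v 1))
  rw [e, prF_sumA, prF_sumA]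
  norm_num

lemma PR2_margy (x u v : Bits 2) : ∑ y : Bits 2, PR2 x y u v = 1/4 := by
  unfold PR2
  have e := sum1_prodx (fun b => prF (x 0) b (u 0) (v 0)) (fun b => prF (x 1) b (u 1) (v 1))
  rw [e, prF_sumB, prF_sumB]
  norm_num

lemma CR_margx (y u v : Bits 2) : ∑ x : Bits 2, CRb x y u v = 1/2 := by
  unfold CRb
  simp only [Finset.sum_add_distrib]
  have e1 := sum1_prodx (fun a => prF a (y 0) (u 0) (v 0)) (fun a => lF a (y 1) (u 1) (v 1))
  have e2 := sum1_prodx (fun a => lF a (y 0) (u 0) (v 0)) (fun a => prF a (y 1) (u 1) (v 1))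
  rw [e1, e2, prF_sumA, prF_sumA, lF_sumA, lF_sumA]
  norm_num

lemma CR_margy (x u v : Bits 2) : ∑ y : Bits 2, CRb x y u v = 1/2 := by
  unfold CRb
  simp only [Finset.sum_add_distrib]
  have e1 := sum1_prodx (fun b => prF (x 0) b (u 0) (v 0)) (fun b => lF (x 1) b (u 1) (v 1))
  have e2 := sum1_prodx (fun b => lF (x 0) b (u 0) (v 0)) (fun b => prF (x 1) b (u 1) (v 1))
  rw [e1, e2, prF_sumB, prF_sumB, lF_sumB, lF_sumB]
  norm_num

/-- The local box with weight `4ε` in the decomposition of two isotropic boxes. -/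
noncomputable def PLbox (ε : ℝ) : Box 2 := fun x y u v =>
  (1 - 4*ε) * Abox x y u v + 4*ε * LLb x y u v

/-- The non-signalling box with weight `1-4ε` in the decomposition. -/
noncomputable def PNSbox (ε : ℝ) : Box 2 := fun x y u v =>
  (1 - 4*ε) * PR2 x y u v + 4*ε * (CRb x y u v - Abox x y u v)

variable {ε : ℝ}

lemma PL_isBox (hε0 : 0 ≤ ε) (hε : ε ≤ 1/4) : IsBox (PLbox ε) := by
  constructor
  · intro x y u v
    exact add_nonneg (mul_nonneg (by linarith) (A_nonneg _ _ _ _))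
      (mul_nonneg (by linarith) (LL_nonneg _ _ _ _))
  · intro u v
    unfold PLbox
    simp only [Finset.sum_add_distrib, ← Finset.mul_sum]
    rw [A_sum_xy, LL_sum_xy]
    ring

lemma PL_local (hε0 : 0 ≤ ε) (hε : ε ≤ 1/4) : IsLocal (PLbox ε) := by
  obtain ⟨wA, hwA0, hwA1, hwA⟩ := A_local
  obtain ⟨wL, hwL0, hwL1, hwL⟩ := LL_local
  refine ⟨fun fg => (1 - 4*ε) * wA fg + 4*ε * wL fg, ?_, ?_, ?_⟩
  · intro fg
    exact add_nonneg (mul_nonneg (by linarith) (hwA0 fg)) (mul_nonneg (by linarith) (hwL0 fg))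
  · simp only [Finset.sum_add_distrib, ← Finset.mul_sum, hwA1, hwL1]
    ring
  · intro x y u v
    simp only [add_mul, Finset.sum_add_distrib, mul_assoc, ← Finset.mul_sum]
    rw [← hwA x y u v, ← hwL x y u v]
    unfold PLbox
    ring

lemma PNS_isBox (hε0 : 0 ≤ ε) (hε : ε ≤ 1/4) : IsBox (PNSbox ε) := by
  constructor
  · intro x y u v
    refine add_nonneg (mul_nonneg (by linarith) (PR2_nonneg _ _ _ _))
      (mul_nonneg (by linarith) ?_)
    have := A_le_CR x y u v
    linarith
  · intro u v
    unfold PNSbox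
    simp only [Finset.sum_add_distrib, Finset.sum_sub_distrib, ← Finset.mul_sum]
    rw [PR2_sum_xy, CR_sum_xy, A_sum_xy]
    ring

lemma PNS_ns : NonSignalling (PNSbox ε) := by
  constructor
  · intro y v u u'
    unfold PNSbox
    simp only [Finset.sum_add_distrib, Finset.sum_sub_distrib, ← Finset.mul_sum]
    rw [PR2_margx, PR2_margx, CR_margx, CR_margx, A_margx y u v u']
  · intro x u v v'
    unfold PNSbox
    simp only [Finset.sum_add_distrib, Finset.sum_sub_distrib, ← Finset.mul_sum]
    rw [PR2_margy, PR2_margy, CR_margy, CR_margy, A_margy x u v v']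

lemma decomp2 (ε : ℝ) (x y u v : Bits 2) :
    isoPRB 2 ε x y u v = (4*ε) * PLbox ε x y u v + (1 - 4*ε) * PNSbox ε x y u v := by
  rw [iso2_factor, iso1_decomp, iso1_decomp]
  unfold PLbox PNSbox PR2 CRb
  rw [LL_eq]
  ring

/-- one-copy boxes -/
noncomputable def PL1 : Box 1 := fun x y u v => lF (x 0) (y 0) (u 0) (v 0)
noncomputable def PN1 : Box 1 := fun x y u v => prF (x 0) (y 0) (u 0) (v 0)

lemma PL1_isBox : IsBox PL1 := by
  constructor
  · intro x y u v; exact lF_nonneg _ _ _ _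
  · intro u v
    unfold PL1
    rw [sum_bits1]
    rw [sum_bits1, sum_bits1]
    simp only [b10]
    have := lF_sum4 (u 0) (v 0)
    linarith

lemma PN1_isBox : IsBox PN1 := by
  constructor
  · intro x y u v; exact prF_nonneg _ _ _ _
  · intro u v
    unfold PN1
    rw [sum_bits1]
    rw [sum_bits1, sum_bits1]
    simp only [b10]
    have := prF_sum4 (u 0) (v 0)
    linarith

lemma PN1_ns : NonSignalling PN1 := by
  constructor
  · intro y v u u'
    unfold PN1
    rw [sum_bits1, sum_bits1]
    simp only [b10]
    rw [prF_sumA, prF_sumA]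
  · intro x u v v'
    unfold PN1
    rw [sum_bits1, sum_bits1]
    simp only [b10]
    rw [prF_sumB, prF_sumB]

lemma lF_cap1 (a b c d : Bool) : lF a b c d = ((cap1 a b c d : ℕ) : ℝ) / 8 := by
  unfold lF cap1; split_ifs <;> norm_num

lemma PL1_local : IsLocal PL1 := by
  apply isLocal_of_list (strats1.map toStrat1) (by simp [len1])
  intro x y u v
  unfold PL1
  rw [lF_cap1, ← cap1fact, ← list_det_cast1, List.map_map]
  simp only [List.length_map, len1]
  rfl

lemma decomp1 (ε : ℝ) (x y u v : Bits 1) :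
    isoPRB 1 ε x y u v = (4*ε) * PL1 x y u v + (1 - 4*ε) * PN1 x y u v := by
  rw [iso1_entry, iso1_decomp]
  unfold PL1 PN1
  ring

end Stmt5Aux4

section Stmt5Aux5
open Finset

noncomputable def T2v (P : Box 2) : ℝ :=
  ∑ u : Bits 2, ∑ v : Bits 2, ∑ x : Bits 2, ∑ y : Bits 2,
    (if xor (x 0) (y 0) = (u 0 && v 0) then 0 else P x y u v)

noncomputable def T1v (P : Box 1) : ℝ :=
  ∑ u : Bits 1, ∑ v : Bits 1, ∑ x : Bits 1, ∑ y : Bits 1,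
    (if xor (x 0) (y 0) = (u 0 && v 0) then 0 else P x y u v)

noncomputable def failF (ε : ℝ) (a b c d : Bool) : ℝ :=
  if xor a b = (c && d) then 0 else isoPRB1 ε a b c d

lemma fail_sum4 (ε : ℝ) (c d : Bool) :
    failF ε false false c d + failF ε false true c d + failF ε true false c d
      + failF ε true true c d = ε := by
  cases c <;> cases d <;> norm_num [failF, isoPRB1] <;> ring

lemma iso1_sum4 (ε : ℝ) (c d : Bool) :
    isoPRB1 ε false false c d + isoPRB1 ε false true c d + isoPRB1 ε true false c d
      + isoPRB1 ε true true c d = 1 := by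
  cases c <;> cases d <;> norm_num [isoPRB1] <;> ring

lemma card_bits2 : ((univ : Finset (Bits 2)).card : ℝ) = 4 := by
  have h : (univ : Finset (Bits 2)).card = 4 := by decide
  rw [h]; norm_num

lemma card_bits1 : ((univ : Finset (Bits 1)).card : ℝ) = 2 := by
  have h : (univ : Finset (Bits 1)).card = 2 := by decide
  rw [h]; norm_num

lemma T2_iso (ε : ℝ) : T2v (isoPRB 2 ε) = 16 * ε := by
  unfold T2v
  have inner : ∀ u v : Bits 2,
      (∑ x : Bits 2, ∑ y : Bits 2,
        if xor (x 0) (y 0) = (u 0 && v 0) then (0:ℝ) else isoPRB 2 ε x y u v) = ε := by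
    intro u v
    have step : ∀ x y : Bits 2,
        (if xor (x 0) (y 0) = (u 0 && v 0) then (0:ℝ) else isoPRB 2 ε x y u v)
          = failF ε (x 0) (y 0) (u 0) (v 0) * isoPRB1 ε (x 1) (y 1) (u 1) (v 1) := by
      intro x y; rw [iso2_factor]; unfold failF; split_ifs <;> ring
    rw [Finset.sum_congr rfl fun x _ => Finset.sum_congr rfl fun y _ => step x y]
    have e := sum2_prod (fun a b => failF ε a b (u 0) (v 0)) (fun a b => isoPRB1 ε a b (u 1) (v 1))
    rw [e, fail_sum4, iso1_sum4]
    ring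
  rw [Finset.sum_congr rfl fun u _ => Finset.sum_congr rfl fun v _ => inner u v]
  rw [Finset.sum_const, Finset.sum_const, nsmul_eq_mul, nsmul_eq_mul, card_bits2]
  ring

lemma T1_iso (ε : ℝ) : T1v (isoPRB 1 ε) = 4 * ε := by
  unfold T1v
  have inner : ∀ u v : Bits 1,
      (∑ x : Bits 1, ∑ y : Bits 1,
        if xor (x 0) (y 0) = (u 0 && v 0) then (0:ℝ) else isoPRB 1 ε x y u v) = ε := by
    intro u v
    rw [sum_bits1]
    rw [sum_bits1, sum_bits1]
    simp only [b10, iso1_entry]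
    have h := fail_sum4 ε (u 0) (v 0)
    unfold failF at h
    linarith [h]
  rw [Finset.sum_congr rfl fun u _ => Finset.sum_congr rfl fun v _ => inner u v]
  rw [Finset.sum_const, Finset.sum_const, nsmul_eq_mul, nsmul_eq_mul, card_bits1]
  ring

lemma chsh_core (p q r w : Bool) :
    1 ≤ (if xor p r = false then (0:ℝ) else 1) + (if xor p w = false then 0 else 1)
      + (if xor q r = false then 0 else 1) + (if xor q w = true then 0 else 1) := by
  cases p <;> cases q <;> cases r <;> cases w <;> norm_num

lemma det_fail_sum2 {n : ℕ} [NeZero n] (f g : Bits n → Bits n) (u v : Bits n) :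
    (∑ x : Bits n, ∑ y : Bits n,
      if xor (x 0) (y 0) = (u 0 && v 0) then (0:ℝ) else detBox f g x y u v)
      = (if xor (f u 0) (g v 0) = (u 0 && v 0) then 0 else 1) := by
  have step : ∀ x y : Bits n,
      (if xor (x 0) (y 0) = (u 0 && v 0) then (0:ℝ) else detBox f g x y u v)
        = (if x = f u then (1:ℝ) else 0) *
            ((if y = g v then (1:ℝ) else 0) *
              (if xor (x 0) (y 0) = (u 0 && v 0) then (0:ℝ) else 1)) := by
    intro x y; rw [detBox_mul]; split_ifs <;> ring
  rw [Finset.sum_congr rfl fun x _ => Finset.sum_congr rfl fun y _ => step x y]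
  simp only [← Finset.mul_sum, boole_mul, Finset.sum_ite_eq', Finset.mem_univ, if_true]
  split_ifs <;> simp_all

lemma T2_det (f g : Bits 2 → Bits 2) : 4 ≤ T2v (detBox f g) := by
  unfold T2v
  rw [Finset.sum_congr rfl fun u _ => Finset.sum_congr rfl fun v _ => det_fail_sum2 f g u v]
  rw [sum_bits2]
  rw [sum_bits2, sum_bits2, sum_bits2, sum_bits2]
  simp only [bb0, bb1, Bool.false_and, Bool.true_and]
  have g1 := chsh_core (f (bb false false) 0) (f (bb true false) 0) (g (bb false false) 0) (g (bb true false) 0)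
  have g2 := chsh_core (f (bb false false) 0) (f (bb true false) 0) (g (bb false true) 0) (g (bb true true) 0)
  have g3 := chsh_core (f (bb false true) 0) (f (bb true true) 0) (g (bb false false) 0) (g (bb true false) 0)
  have g4 := chsh_core (f (bb false true) 0) (f (bb true true) 0) (g (bb false true) 0) (g (bb true true) 0)
  linarith [g1, g2, g3, g4]

lemma T1_det (f g : Bits 1 → Bits 1) : 1 ≤ T1v (detBox f g) := by
  unfold T1v
  rw [Finset.sum_congr rfl fun u _ => Finset.sum_congr rfl fun v _ => det_fail_sum2 f g u v]
  rw [sum_bits1]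
  rw [sum_bits1, sum_bits1]
  simp only [b10, Bool.false_and, Bool.true_and]
  have g1 := chsh_core (f (b1 false) 0) (f (b1 true) 0) (g (b1 false) 0) (g (b1 true) 0)
  linarith [g1]

lemma T2_nonneg (P : Box 2) (hP : ∀ x y u v, 0 ≤ P x y u v) : 0 ≤ T2v P := by
  unfold T2v
  refine Finset.sum_nonneg fun u _ => Finset.sum_nonneg fun v _ =>
    Finset.sum_nonneg fun x _ => Finset.sum_nonneg fun y _ => ?_
  split_ifs
  · exact le_rfl
  · exact hP x y u v

lemma T1_nonneg (P : Box 1) (hP : ∀ x y u v, 0 ≤ P x y u v) : 0 ≤ T1v P := by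
  unfold T1v
  refine Finset.sum_nonneg fun u _ => Finset.sum_nonneg fun v _ =>
    Finset.sum_nonneg fun x _ => Finset.sum_nonneg fun y _ => ?_
  split_ifs
  · exact le_rfl
  · exact hP x y u v

lemma T2_split (ε p : ℝ) (PL PNS : Box 2)
    (hdec : ∀ x y u v, isoPRB 2 ε x y u v = p * PL x y u v + (1-p) * PNS x y u v) :
    T2v (isoPRB 2 ε) = p * T2v PL + (1-p) * T2v PNS := by
  unfold T2v
  rw [Finset.sum_congr rfl fun u _ => Finset.sum_congr rfl fun v _ =>
    Finset.sum_congr rfl fun x _ => Finset.sum_congr rfl fun y _ =>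
      show (if xor (x 0) (y 0) = (u 0 && v 0) then (0:ℝ) else isoPRB 2 ε x y u v)
        = p * (if xor (x 0) (y 0) = (u 0 && v 0) then (0:ℝ) else PL x y u v)
          + (1-p) * (if xor (x 0) (y 0) = (u 0 && v 0) then (0:ℝ) else PNS x y u v) from by
        rw [hdec]; split_ifs <;> ring]
  simp only [Finset.sum_add_distrib, ← Finset.mul_sum]

lemma T1_split (ε p : ℝ) (PL PNS : Box 1)
    (hdec : ∀ x y u v, isoPRB 1 ε x y u v = p * PL x y u v + (1-p) * PNS x y u v) :
    T1v (isoPRB 1 ε) = p * T1v PL + (1-p) * T1v PNS := by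
  unfold T1v
  rw [Finset.sum_congr rfl fun u _ => Finset.sum_congr rfl fun v _ =>
    Finset.sum_congr rfl fun x _ => Finset.sum_congr rfl fun y _ =>
      show (if xor (x 0) (y 0) = (u 0 && v 0) then (0:ℝ) else isoPRB 1 ε x y u v)
        = p * (if xor (x 0) (y 0) = (u 0 && v 0) then (0:ℝ) else PL x y u v)
          + (1-p) * (if xor (x 0) (y 0) = (u 0 && v 0) then (0:ℝ) else PNS x y u v) from by
        rw [hdec]; split_ifs <;> ring]
  simp only [Finset.sum_add_distrib, ← Finset.mul_sum]

lemma T2_local (PL : Box 2) (hL : IsLocal PL) : 4 ≤ T2v PL := by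
  obtain ⟨w, hw0, hw1, hw⟩ := hL
  have key : T2v PL = ∑ fg : (Bits 2 → Bits 2) × (Bits 2 → Bits 2),
      w fg * T2v (detBox fg.1 fg.2) := by
    unfold T2v
    rw [Finset.sum_congr rfl fun u _ => Finset.sum_congr rfl fun v _ =>
      Finset.sum_congr rfl fun x _ => Finset.sum_congr rfl fun y _ =>
        show (if xor (x 0) (y 0) = (u 0 && v 0) then (0:ℝ) else PL x y u v)
          = ∑ fg : (Bits 2 → Bits 2) × (Bits 2 → Bits 2),
              w fg * (if xor (x 0) (y 0) = (u 0 && v 0) then (0:ℝ) else detBox fg.1 fg.2 x y u v) from by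
          rw [hw x y u v]
          split_ifs with h
          · simp
          · rfl]
    rw [Finset.sum_congr rfl fun u _ => Finset.sum_congr rfl fun v _ =>
      Finset.sum_congr rfl fun x _ => Finset.sum_comm]
    rw [Finset.sum_congr rfl fun u _ => Finset.sum_congr rfl fun v _ => Finset.sum_comm]
    rw [Finset.sum_congr rfl fun u _ => Finset.sum_comm]
    rw [Finset.sum_comm]
    exact Finset.sum_congr rfl fun fg _ => by simp only [← Finset.mul_sum]
  rw [key]
  have step : ∀ fg : (Bits 2 → Bits 2) × (Bits 2 → Bits 2),
      w fg * 4 ≤ w fg * T2v (detBox fg.1 fg.2) := fun fg =>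
    mul_le_mul_of_nonneg_left (T2_det fg.1 fg.2) (hw0 fg)
  have h4 : ∑ fg : (Bits 2 → Bits 2) × (Bits 2 → Bits 2), w fg * 4 = 4 := by
    rw [← Finset.sum_mul, hw1]; ring
  calc (4:ℝ) = ∑ fg : (Bits 2 → Bits 2) × (Bits 2 → Bits 2), w fg * 4 := h4.symm
    _ ≤ _ := Finset.sum_le_sum fun fg _ => step fg

lemma T1_local (PL : Box 1) (hL : IsLocal PL) : 1 ≤ T1v PL := by
  obtain ⟨w, hw0, hw1, hw⟩ := hL
  have key : T1v PL = ∑ fg : (Bits 1 → Bits 1) × (Bits 1 → Bits 1),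
      w fg * T1v (detBox fg.1 fg.2) := by
    unfold T1v
    rw [Finset.sum_congr rfl fun u _ => Finset.sum_congr rfl fun v _ =>
      Finset.sum_congr rfl fun x _ => Finset.sum_congr rfl fun y _ =>
        show (if xor (x 0) (y 0) = (u 0 && v 0) then (0:ℝ) else PL x y u v)
          = ∑ fg : (Bits 1 → Bits 1) × (Bits 1 → Bits 1),
              w fg * (if xor (x 0) (y 0) = (u 0 && v 0) then (0:ℝ) else detBox fg.1 fg.2 x y u v) from by
          rw [hw x y u v]
          split_ifs with h
          · simp
          · rfl]
    rw [Finset.sum_congr rfl fun u _ => Finset.sum_congr rfl fun v _ =>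
      Finset.sum_congr rfl fun x _ => Finset.sum_comm]
    rw [Finset.sum_congr rfl fun u _ => Finset.sum_congr rfl fun v _ => Finset.sum_comm]
    rw [Finset.sum_congr rfl fun u _ => Finset.sum_comm]
    rw [Finset.sum_comm]
    exact Finset.sum_congr rfl fun fg _ => by simp only [← Finset.mul_sum]
  rw [key]
  have step : ∀ fg : (Bits 1 → Bits 1) × (Bits 1 → Bits 1),
      w fg * 1 ≤ w fg * T1v (detBox fg.1 fg.2) := fun fg =>
    mul_le_mul_of_nonneg_left (T1_det fg.1 fg.2) (hw0 fg)
  have h1 : ∑ fg : (Bits 1 → Bits 1) × (Bits 1 → Bits 1), w fg * 1 = 1 := by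
    rw [← Finset.sum_mul, hw1]; ring
  calc (1:ℝ) = ∑ fg : (Bits 1 → Bits 1) × (Bits 1 → Bits 1), w fg * 1 := h1.symm
    _ ≤ _ := Finset.sum_le_sum fun fg _ => step fg

end Stmt5Aux5

section Stmt5Final
open Finset

lemma localPart2_eq (ε : ℝ) (hε0 : 0 ≤ ε) (hε : ε ≤ 1 / 4) :
    localPart (isoPRB 2 ε) = 4 * ε := by
  unfold localPart
  apply IsGreatest.csSup_eq
  constructor
  · refine ⟨by linarith, by linarith, PLbox ε, PNSbox ε, PL_isBox hε0 hε, PL_local hε0 hε,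
      PNS_isBox hε0 hε, PNS_ns, fun x y u v => ?_⟩
    rw [decomp2 ε x y u v]
  · rintro p ⟨hp0, hp1, PL, PNS, hPLb, hPLl, hPNSb, _, hdec⟩
    have h1 : T2v (isoPRB 2 ε) = p * T2v PL + (1-p) * T2v PNS :=
      T2_split ε p PL PNS fun x y u v => hdec x y u v
    have h2 : T2v (isoPRB 2 ε) = 16 * ε := T2_iso ε
    have h3 : 4 ≤ T2v PL := T2_local PL hPLl
    have h4 : 0 ≤ T2v PNS := T2_nonneg PNS hPNSb.1
    nlinarith [mul_le_mul_of_nonneg_left h3 hp0,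
      mul_nonneg (by linarith : (0:ℝ) ≤ 1 - p) h4]

lemma localPart1_eq (ε : ℝ) (hε0 : 0 ≤ ε) (hε : ε ≤ 1 / 4) :
    localPart (isoPRB 1 ε) = 4 * ε := by
  unfold localPart
  apply IsGreatest.csSup_eq
  constructor
  · refine ⟨by linarith, by linarith, PL1, PN1, PL1_isBox, PL1_local,
      PN1_isBox, PN1_ns, fun x y u v => ?_⟩
    rw [decomp1 ε x y u v]
  · rintro p ⟨hp0, hp1, PL, PNS, hPLb, hPLl, hPNSb, _, hdec⟩
    have h1 : T1v (isoPRB 1 ε) = p * T1v PL + (1-p) * T1v PNS :=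
      T1_split ε p PL PNS fun x y u v => hdec x y u v
    have h2 : T1v (isoPRB 1 ε) = 4 * ε := T1_iso ε
    have h3 : 1 ≤ T1v PL := T1_local PL hPLl
    have h4 : 0 ≤ T1v PNS := T1_nonneg PNS hPNSb.1
    nlinarith [mul_le_mul_of_nonneg_left h3 hp0,
      mul_nonneg (by linarith : (0:ℝ) ≤ 1 - p) h4]

end Stmt5Final

/-- the local part of two isotropic ε-PRBs is `4ε`, the same as for
a single isotropic ε-PRB. -/
theorem stmt5 (ε : ℝ) (hε0 : 0 ≤ ε) (hε : ε ≤ 1 / 4) :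
    localPart (isoPRB 2 ε) = 4 * ε ∧
    localPart (isoPRB 2 ε) = localPart (isoPRB 1 ε) := by
  refine ⟨localPart2_eq ε hε0 hε, ?_⟩
  rw [localPart2_eq ε hε0 hε, localPart1_eq ε hε0 hε]
end

section
/- For every n ≥ 1, there exist constants c₁ > 0 and c₂ > 0 such that for all ε ∈ [0,1/4], c₁·ε^{⌈n/2⌉} ≤ localPart(P^{n,ε}) ≤ c₂·ε^{⌈n/2⌉}, where localPart(P^{n,ε}) denotes the local part of the system of n isotropic ε-PRBs. That is, the local part of n isotropic ε-PRBs is of order Θ(ε^{⌈n/2⌉}). -/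
open Finset

/-! ### Auxiliary material for `stmt10` -/

section Stmt10Aux

open Finset

variable {n : ℕ}

/-- Game `i` is lost by strategy `(f, g)` on inputs `(u, v)`. -/
def Lost (f g : Bits n → Bits n) (u v : Bits n) (i : Fin n) : Prop :=
  xor (f u i) (g v i) ≠ (u i && v i)

instance (f g : Bits n → Bits n) (u v : Bits n) : DecidablePred (Lost f g u v) := fun i => by
  unfold Lost; infer_instance

/-- The set of lost games. -/
def lostSet (f g : Bits n → Bits n) (u v : Bits n) : Finset (Fin n) :=
  univ.filter (Lost f g u v)

lemma isoPRB1_eq (ε : ℝ) (f g : Bits n → Bits n) (u v : Bits n) (i : Fin n) :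
    isoPRB1 ε (f u i) (g v i) (u i) (v i) =
      if Lost f g u v i then ε / 2 else (1 - ε) / 2 := by
  by_cases h : Lost f g u v i
  · rw [if_pos h, isoPRB1, if_neg h]
  · rw [if_neg h, isoPRB1, if_pos (not_not.mp h)]

lemma isoPRB_det_le {ε : ℝ} (hε0 : 0 ≤ ε) (hε1 : ε ≤ 1)
    (f g : Bits n → Bits n) (u v : Bits n) {k : ℕ} (hk : k ≤ (lostSet f g u v).card) :
    isoPRB n ε (f u) (g v) u v ≤ ε ^ k := by
  have h1 : isoPRB n ε (f u) (g v) u v ≤ ∏ i : Fin n, (if Lost f g u v i then ε else 1) := by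
    unfold isoPRB
    apply Finset.prod_le_prod
    · intro i _
      rw [isoPRB1_eq]
      split <;> [linarith; linarith]
    · intro i _
      rw [isoPRB1_eq]
      split <;> [linarith; linarith]
  have h2 : ∏ i : Fin n, (if Lost f g u v i then ε else (1:ℝ)) = ε ^ (lostSet f g u v).card := by
    rw [lostSet, ← Finset.prod_filter (Lost f g u v) (fun _ => ε), Finset.prod_const]
  calc isoPRB n ε (f u) (g v) u v ≤ ε ^ (lostSet f g u v).card := by rw [← h2]; exact h1
    _ ≤ ε ^ k := pow_le_pow_of_le_one hε0 hε1 hk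

lemma isoPRB_det_ge {ε : ℝ} (hε0 : 0 ≤ ε) (hε4 : ε ≤ 1 / 4)
    (f g : Bits n → Bits n) (u v : Bits n) {k : ℕ} (hk : (lostSet f g u v).card ≤ k) :
    (3 / 8 : ℝ) ^ n * ε ^ k ≤ isoPRB n ε (f u) (g v) u v := by
  have h1 : ∏ i : Fin n, ((3/8 : ℝ) * (if Lost f g u v i then ε else 1))
      ≤ isoPRB n ε (f u) (g v) u v := by
    unfold isoPRB
    apply Finset.prod_le_prod
    · intro i _
      split <;> positivity
    · intro i _
      rw [isoPRB1_eq]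
      split <;> [linarith; linarith]
  have h2 : ∏ i : Fin n, ((3/8 : ℝ) * (if Lost f g u v i then ε else 1))
      = (3/8 : ℝ) ^ n * ε ^ (lostSet f g u v).card := by
    rw [Finset.prod_mul_distrib, Finset.prod_const, lostSet,
      ← Finset.prod_filter (Lost f g u v) (fun _ => ε), Finset.prod_const]
    simp
  have h3 : ε ^ k ≤ ε ^ (lostSet f g u v).card :=
    pow_le_pow_of_le_one hε0 (by linarith) hk
  have : (3/8 : ℝ) ^ n * ε ^ k ≤ (3/8 : ℝ) ^ n * ε ^ (lostSet f g u v).card := by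
    apply mul_le_mul_of_nonneg_left h3 (by positivity)
  calc (3/8 : ℝ) ^ n * ε ^ k ≤ (3/8 : ℝ) ^ n * ε ^ (lostSet f g u v).card := this
    _ = _ := h2.symm
    _ ≤ _ := h1

/-! #### Marginals and sums -/

lemma sum_fun_prod (F : Fin n → Bool → ℝ) :
    ∑ x : Bits n, ∏ i, F i (x i) = ∏ i, ∑ b, F i b :=
  (Fintype.prod_sum F).symm

lemma isoPRB_nonneg {ε : ℝ} (hε0 : 0 ≤ ε) (hε1 : ε ≤ 1) (x y u v : Bits n) :
    0 ≤ isoPRB n ε x y u v := by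
  unfold isoPRB
  apply Finset.prod_nonneg
  intro i _
  unfold isoPRB1
  split <;> linarith

lemma sum_x_isoPRB (ε : ℝ) (y u v : Bits n) :
    ∑ x : Bits n, isoPRB n ε x y u v = (1 / 2 : ℝ) ^ n := by
  unfold isoPRB
  rw [sum_fun_prod (fun i b => isoPRB1 ε b (y i) (u i) (v i))]
  have : ∀ i : Fin n, ∑ b : Bool, isoPRB1 ε b (y i) (u i) (v i) = 1 / 2 := by
    intro i
    rw [Fintype.sum_bool]
    cases hy : y i <;> cases hu : u i <;> cases hv : v i <;>
      simp [isoPRB1] <;> ring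
  rw [Finset.prod_congr rfl fun i _ => this i, Finset.prod_const]
  simp

lemma sum_y_isoPRB (ε : ℝ) (x u v : Bits n) :
    ∑ y : Bits n, isoPRB n ε x y u v = (1 / 2 : ℝ) ^ n := by
  unfold isoPRB
  rw [sum_fun_prod (fun i b => isoPRB1 ε (x i) b (u i) (v i))]
  have : ∀ i : Fin n, ∑ b : Bool, isoPRB1 ε (x i) b (u i) (v i) = 1 / 2 := by
    intro i
    rw [Fintype.sum_bool]
    cases hx : x i <;> cases hu : u i <;> cases hv : v i <;>
      simp [isoPRB1] <;> ring
  rw [Finset.prod_congr rfl fun i _ => this i, Finset.prod_const]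
  simp

lemma sum_xy_isoPRB (ε : ℝ) (u v : Bits n) :
    ∑ x : Bits n, ∑ y : Bits n, isoPRB n ε x y u v = 1 := by
  have h : ∀ x : Bits n, ∑ y : Bits n, isoPRB n ε x y u v = (1/2 : ℝ) ^ n :=
    fun x => sum_y_isoPRB ε x u v
  rw [Finset.sum_congr rfl fun x _ => h x, Finset.sum_const, Finset.card_univ]
  have hcard : Fintype.card (Bits n) = 2 ^ n := by
    simp [Bits]
  rw [hcard, nsmul_eq_mul]
  push_cast
  rw [← mul_pow]
  norm_num

/-! #### detBox facts -/

lemma detBox_nonneg (f g : Bits n → Bits n) (x y u v : Bits n) :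
    0 ≤ detBox f g x y u v := by
  unfold detBox; split <;> norm_num

lemma sum_x_detBox (f g : Bits n → Bits n) (y u v : Bits n) :
    ∑ x : Bits n, detBox f g x y u v = if y = g v then 1 else 0 := by
  unfold detBox
  simp [ite_and, Finset.sum_ite_eq']

lemma sum_y_detBox (f g : Bits n → Bits n) (x u v : Bits n) :
    ∑ y : Bits n, detBox f g x y u v = if x = f u then 1 else 0 := by
  unfold detBox
  simp [ite_and, Finset.sum_ite_eq']

lemma sum_xy_detBox (f g : Bits n → Bits n) (u v : Bits n) :
    ∑ x : Bits n, ∑ y : Bits n, detBox f g x y u v = 1 := by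
  rw [Finset.sum_congr rfl fun x _ => sum_y_detBox f g x u v]
  simp [Finset.sum_ite_eq']

lemma isBox_detBox (f g : Bits n → Bits n) : IsBox (detBox f g) :=
  ⟨detBox_nonneg f g, sum_xy_detBox f g⟩

lemma isLocal_detBox (f g : Bits n → Bits n) : IsLocal (detBox f g) := by
  classical
  refine ⟨fun fg => if fg = (f, g) then 1 else 0, fun fg => by dsimp only; split <;> norm_num, by
    simp [Finset.sum_ite_eq'], ?_⟩
  intro x y u v
  rw [Finset.sum_congr rfl (fun fg _ => by rw [ite_mul, one_mul, zero_mul])]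
  simp [Finset.sum_ite_eq']

end Stmt10Aux

/-! ### The pairing strategy (for the lower bound) -/

section Strategy

open Finset

/-- Alice's gadget outputs for a block of two games, given her two inputs. -/
def gadA (s₁ s₂ : Bool) : Bool × Bool := (false, s₁ && s₂)

/-- Bob's gadget outputs for a block of two games, given his two inputs. -/
def gadB (t₁ t₂ : Bool) : Bool × Bool := (t₁ && !t₂, false)

lemma gadget_wins (s₁ s₂ t₁ t₂ : Bool) :
    xor (gadA s₁ s₂).1 (gadB t₁ t₂).1 = (s₁ && t₁) ∨
    xor (gadA s₁ s₂).2 (gadB t₁ t₂).2 = (s₂ && t₂) := by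
  revert s₁ s₂ t₁ t₂; decide

/-- Total lookup in a bit string. -/
def getBit {n : ℕ} (u : Bits n) (k : ℕ) : Bool :=
  if h : k < n then u ⟨k, h⟩ else false

lemma getBit_fin {n : ℕ} (u : Bits n) (i : Fin n) : getBit u i.val = u i := by
  simp [getBit, i.isLt]

/-- Alice's strategy: games are paired `(0,1), (2,3), …`. -/
def stratA (n : ℕ) : Bits n → Bits n := fun u i =>
  if i.val % 2 = 0 then
    if i.val + 1 < n then (gadA (u i) (getBit u (i.val + 1))).1 else false
  else (gadA (getBit u (i.val - 1)) (u i)).2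

/-- Bob's strategy. -/
def stratB (n : ℕ) : Bits n → Bits n := fun v i =>
  if i.val % 2 = 0 then
    if i.val + 1 < n then (gadB (v i) (getBit v (i.val + 1))).1 else false
  else (gadB (getBit v (i.val - 1)) (v i)).2

lemma strat_block {n : ℕ} (u v : Bits n) (i j : Fin n)
    (hi : i.val % 2 = 0) (hj : (j : ℕ) = i.val + 1) :
    ¬(Lost (stratA n) (stratB n) u v i ∧ Lost (stratA n) (stratB n) u v j) := by
  have hjn : i.val + 1 < n := hj ▸ j.isLt
  have hgu : getBit u (i.val + 1) = u j := by rw [← hj, getBit_fin]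
  have hgv : getBit v (i.val + 1) = v j := by rw [← hj, getBit_fin]
  have hgu' : getBit u (j.val - 1) = u i := by
    have : j.val - 1 = i.val := by omega
    rw [this, getBit_fin]
  have hgv' : getBit v (j.val - 1) = v i := by
    have : j.val - 1 = i.val := by omega
    rw [this, getBit_fin]
  have hjodd : ¬(j.val % 2 = 0) := by omega
  have eA1 : stratA n u i = (gadA (u i) (u j)).1 := by
    rw [stratA, if_pos hi, if_pos hjn, hgu]
  have eB1 : stratB n v i = (gadB (v i) (v j)).1 := by
    rw [stratB, if_pos hi, if_pos hjn, hgv]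
  have eA2 : stratA n u j = (gadA (u i) (u j)).2 := by
    rw [stratA, if_neg hjodd, hgu']
  have eB2 : stratB n v j = (gadB (v i) (v j)).2 := by
    rw [stratB, if_neg hjodd, hgv']
  unfold Lost
  rw [eA1, eB1, eA2, eB2]
  rcases gadget_wins (u i) (u j) (v i) (v j) with h | h
  · tauto
  · tauto

lemma strat_card {n : ℕ} (u v : Bits n) :
    (lostSet (stratA n) (stratB n) u v).card ≤ (n + 1) / 2 := by
  have h := Finset.card_le_card_of_injOn (fun i : Fin n => i.val / 2)
    (s := lostSet (stratA n) (stratB n) u v) (t := Finset.range ((n + 1) / 2))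
    (fun a _ => by
      dsimp only
      rw [Finset.mem_coe, Finset.mem_range]
      have := a.isLt
      omega)
    (by
      intro a ha b hb hab
      by_contra hne
      have hv : a.val ≠ b.val := fun h => hne (Fin.ext h)
      have ha' : Lost (stratA n) (stratB n) u v a := (Finset.mem_filter.mp ha).2
      have hb' : Lost (stratA n) (stratB n) u v b := (Finset.mem_filter.mp hb).2
      have hab' : a.val / 2 = b.val / 2 := hab
      have hcase : (a.val % 2 = 0 ∧ b.val = a.val + 1) ∨
          (b.val % 2 = 0 ∧ a.val = b.val + 1) := by omega
      rcases hcase with ⟨h1, h2⟩ | ⟨h1, h2⟩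
      · exact strat_block u v a b h1 h2 ⟨ha', hb'⟩
      · exact strat_block u v b a h1 h2 ⟨hb', ha'⟩)
  simpa using h

/-! ### Every strategy loses many games somewhere -/

lemma exists_bad_input {n : ℕ} (f g : Bits n → Bits n) :
    ∃ u v : Bits n, (n + 1) / 2 ≤ (lostSet f g u v).card := by
  classical
  set v₀ : Bits n := fun _ => false with hv₀
  set v₁ : Bits n := fun _ => true with hv₁
  set u : Bits n := fun i => !(xor (g v₀ i) (g v₁ i)) with hu
  have hcompl : ∀ i : Fin n, Lost f g u v₀ i ↔ ¬ Lost f g u v₁ i := by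
    intro i
    have hui : u i = !(xor (g v₀ i) (g v₁ i)) := by rw [hu]
    have hv0i : v₀ i = false := by rw [hv₀]
    have hv1i : v₁ i = true := by rw [hv₁]
    unfold Lost
    rw [hui, hv0i, hv1i]
    cases hfa : f u i <;> cases hb0 : g v₀ i <;> cases hb1 : g v₁ i <;> simp
  have hsum : (lostSet f g u v₀).card + (lostSet f g u v₁).card = n := by
    have h1 : lostSet f g u v₀ = univ.filter (fun i => ¬ Lost f g u v₁ i) := by
      unfold lostSet
      exact Finset.filter_congr (fun i _ => by rw [hcompl i])
    rw [h1, lostSet, add_comm,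
      Finset.card_filter_add_card_filter_not (Lost f g u v₁)]
    simp
  by_cases h : (n + 1) / 2 ≤ (lostSet f g u v₀).card
  · exact ⟨u, v₀, h⟩
  · exact ⟨u, v₁, by omega⟩

end Strategy

/-! ### Bounds on the local part -/

section LocalPartBounds

open Finset

lemma localPart_isoPRB_le (n : ℕ) {ε : ℝ} (hε0 : 0 ≤ ε) (hε4 : ε ≤ 1 / 4) :
    localPart (isoPRB n ε) ≤
      (Fintype.card ((Bits n → Bits n) × (Bits n → Bits n)) : ℝ) * ε ^ ((n + 1) / 2) := by
  have hε1 : ε ≤ 1 := by linarith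
  rw [localPart]
  apply Real.sSup_le
  · rintro q ⟨hq0, hq1, PL, PNS, hPLbox, hPLloc, hPNSbox, _, heq⟩
    obtain ⟨w, hw0, hw1, hwrep⟩ := hPLloc
    have key : ∀ fg : (Bits n → Bits n) × (Bits n → Bits n),
        q * w fg ≤ ε ^ ((n + 1) / 2) := by
      rintro ⟨f, g⟩
      obtain ⟨u, v, hcard⟩ := exists_bad_input f g
      have hdet : detBox f g (f u) (g v) u v = 1 := by simp [detBox]
      have h2 : w (f, g) ≤ PL (f u) (g v) u v := by
        rw [hwrep]
        have := Finset.single_le_sum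
          (f := fun fg : (Bits n → Bits n) × (Bits n → Bits n) =>
            w fg * detBox fg.1 fg.2 (f u) (g v) u v)
          (fun fg _ => mul_nonneg (hw0 fg) (detBox_nonneg fg.1 fg.2 _ _ _ _))
          (Finset.mem_univ (f, g))
        simpa [hdet] using this
      have h3 : q * PL (f u) (g v) u v ≤ isoPRB n ε (f u) (g v) u v := by
        rw [heq]
        have hns : 0 ≤ (1 - q) * PNS (f u) (g v) u v :=
          mul_nonneg (by linarith) (hPNSbox.1 _ _ _ _)
        linarith
      have h4 : isoPRB n ε (f u) (g v) u v ≤ ε ^ ((n + 1) / 2) :=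
        isoPRB_det_le hε0 hε1 f g u v hcard
      calc q * w (f, g) ≤ q * PL (f u) (g v) u v :=
            mul_le_mul_of_nonneg_left h2 hq0
        _ ≤ ε ^ ((n + 1) / 2) := le_trans h3 h4
    calc q = ∑ fg : (Bits n → Bits n) × (Bits n → Bits n), q * w fg := by
          rw [← Finset.mul_sum, hw1, mul_one]
      _ ≤ ∑ _fg : (Bits n → Bits n) × (Bits n → Bits n), ε ^ ((n + 1) / 2) :=
          Finset.sum_le_sum fun fg _ => key fg
      _ = _ := by rw [Finset.sum_const, nsmul_eq_mul, Finset.card_univ]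
  · positivity

lemma le_localPart_isoPRB {n : ℕ} (hn : 1 ≤ n) {ε : ℝ} (hε0 : 0 ≤ ε) (hε4 : ε ≤ 1 / 4) :
    (3 / 8 : ℝ) ^ n * ε ^ ((n + 1) / 2) ≤ localPart (isoPRB n ε) := by
  have hε1 : ε ≤ 1 := by linarith
  set p : ℝ := (3 / 8 : ℝ) ^ n * ε ^ ((n + 1) / 2) with hp
  have hp0 : 0 ≤ p := by rw [hp]; positivity
  have hplt1 : p < 1 := by
    have h38 : (3 / 8 : ℝ) ^ n ≤ 3 / 8 := by
      calc (3 / 8 : ℝ) ^ n ≤ (3 / 8 : ℝ) ^ 1 :=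
            pow_le_pow_of_le_one (by norm_num) (by norm_num) hn
        _ = 3 / 8 := pow_one _
    have hεk : ε ^ ((n + 1) / 2) ≤ 1 := pow_le_one₀ hε0 hε1
    have : p ≤ 3 / 8 := by
      rw [hp]
      calc (3 / 8 : ℝ) ^ n * ε ^ ((n + 1) / 2) ≤ (3 / 8 : ℝ) ^ n * 1 :=
            mul_le_mul_of_nonneg_left hεk (by positivity)
        _ = (3 / 8 : ℝ) ^ n := mul_one _
        _ ≤ 3 / 8 := h38
    linarith
  have h1p : (0 : ℝ) < 1 - p := by linarith
  have hdom : ∀ x y u v : Bits n,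
      p * detBox (stratA n) (stratB n) x y u v ≤ isoPRB n ε x y u v := by
    intro x y u v
    by_cases h : x = stratA n u ∧ y = stratB n v
    · obtain ⟨hx, hy⟩ := h
      subst hx; subst hy
      have hone : detBox (stratA n) (stratB n) (stratA n u) (stratB n v) u v = 1 := by
        simp [detBox]
      rw [hone, mul_one, hp]
      exact isoPRB_det_ge hε0 hε4 (stratA n) (stratB n) u v (strat_card u v)
    · have hzero : detBox (stratA n) (stratB n) x y u v = 0 := by
        simp only [detBox, if_neg h]
      rw [hzero, mul_zero]
      exact isoPRB_nonneg hε0 hε1 x y u v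
  rw [localPart]
  apply le_csSup
  · exact ⟨1, fun q hq => hq.2.1⟩
  · refine ⟨hp0, le_of_lt hplt1, detBox (stratA n) (stratB n),
      fun x y u v =>
        (isoPRB n ε x y u v - p * detBox (stratA n) (stratB n) x y u v) / (1 - p),
      isBox_detBox _ _, isLocal_detBox _ _, ⟨?_, ?_⟩, ⟨?_, ?_⟩, ?_⟩
    · intro x y u v
      dsimp only
      apply div_nonneg _ (le_of_lt h1p)
      have := hdom x y u v
      linarith
    · intro u v
      dsimp only
      have hsplit : ∀ x y : Bits n,
          (isoPRB n ε x y u v - p * detBox (stratA n) (stratB n) x y u v) / (1 - p)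
            = isoPRB n ε x y u v * (1 - p)⁻¹
              - detBox (stratA n) (stratB n) x y u v * (p * (1 - p)⁻¹) := by
        intro x y
        field_simp
      simp only [hsplit, Finset.sum_sub_distrib, ← Finset.sum_mul]
      rw [sum_xy_isoPRB, sum_xy_detBox]
      field_simp
    · intro y v u u'
      dsimp only
      have hmarg : ∀ u'' : Bits n,
          ∑ x : Bits n,
            (isoPRB n ε x y u'' v - p * detBox (stratA n) (stratB n) x y u'' v) / (1 - p)
          = (1 / 2 : ℝ) ^ n * (1 - p)⁻¹
              - (if y = stratB n v then (1 : ℝ) else 0) * (p * (1 - p)⁻¹) := by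
        intro u''
        have hsplit : ∀ x : Bits n,
            (isoPRB n ε x y u'' v - p * detBox (stratA n) (stratB n) x y u'' v) / (1 - p)
              = isoPRB n ε x y u'' v * (1 - p)⁻¹
                - detBox (stratA n) (stratB n) x y u'' v * (p * (1 - p)⁻¹) := by
          intro x
          field_simp
        simp only [hsplit, Finset.sum_sub_distrib, ← Finset.sum_mul]
        rw [sum_x_isoPRB, sum_x_detBox]
      rw [hmarg u, hmarg u']
    · intro x u v v'
      dsimp only
      have hmarg : ∀ v'' : Bits n,
          ∑ y : Bits n,
            (isoPRB n ε x y u v'' - p * detBox (stratA n) (stratB n) x y u v'') / (1 - p)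
          = (1 / 2 : ℝ) ^ n * (1 - p)⁻¹
              - (if x = stratA n u then (1 : ℝ) else 0) * (p * (1 - p)⁻¹) := by
        intro v''
        have hsplit : ∀ y : Bits n,
            (isoPRB n ε x y u v'' - p * detBox (stratA n) (stratB n) x y u v'') / (1 - p)
              = isoPRB n ε x y u v'' * (1 - p)⁻¹
                - detBox (stratA n) (stratB n) x y u v'' * (p * (1 - p)⁻¹) := by
          intro y
          field_simp
        simp only [hsplit, Finset.sum_sub_distrib, ← Finset.sum_mul]
        rw [sum_y_isoPRB, sum_y_detBox]
      rw [hmarg v, hmarg v']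
    · intro x y u v
      dsimp only
      field_simp
      ring

end LocalPartBounds

/-- the local part of n isotropic ε-PRBs is `Θ(ε^⌈n/2⌉)`. -/
theorem stmt10 (n : ℕ) (hn : 1 ≤ n) :
    ∃ c₁ > (0 : ℝ), ∃ c₂ > (0 : ℝ), ∀ ε : ℝ, 0 ≤ ε → ε ≤ 1 / 4 →
      c₁ * ε ^ ((n + 1) / 2) ≤ localPart (isoPRB n ε) ∧
      localPart (isoPRB n ε) ≤ c₂ * ε ^ ((n + 1) / 2) := by
  refine ⟨(3 / 8 : ℝ) ^ n, by positivity,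
    (Fintype.card ((Bits n → Bits n) × (Bits n → Bits n)) : ℝ), ?_, ?_⟩
  · exact_mod_cast Nat.cast_pos.mpr Fintype.card_pos
  · intro ε hε0 hε4
    exact ⟨le_localPart_isoPRB hn hε0 hε4, localPart_isoPRB_le n hε0 hε4⟩
end
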